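/- In the finite-support ω-slice product ℙ of identical posets along slices, if p, q ∈ ℙ agree on s (i.e., p↾s = q↾s as functions) and π ∈ Aut(ω₁×ω, ω) fixes s pointwise and satisfies dom(p) ∩ π[dom(q)] ⊆ s, then p and π*(q) are compatible in ℙ. -/

import Mathlib

universe u v

variable {ι : Type u} {α : Type v}

/-- Conditions of the finite-support ω-slice product over `ι × ω` (the index set
`ω₁` abstracted as `ι`), the values on slice `{ν} × ω` lying in the poset `V ν`. -/
def Cond (ι : Type u) (α : Type v) : Type (max u v) := ι × ℕ → Option α

def dom (p : Cond ι α) : Set (ι × ℕ) := {i | p i ≠ none}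

def FinSupp (p : Cond ι α) : Prop := (dom p).Finite

def Valid (V : ι → Set α) (p : Cond ι α) : Prop := ∀ i a, p i = some a → a ∈ V i.1

def condLE [Preorder α] (p q : Cond ι α) : Prop :=
  ∀ i a, q i = some a → ∃ b, p i = some b ∧ b ≤ a

/-- The automorphism `π*` induced on conditions by a permutation of `ι × ω`. -/
def act (π : Equiv.Perm (ι × ℕ)) (p : Cond ι α) : Cond ι α := fun i => p (π.symm i)

/-- if `p, q` agree on the slice `s`, and `π ∈ Aut(ω₁×ω, ω)` fixes
`s` pointwise with `dom p ∩ π[dom q] ⊆ s`, then `p` and `π*(q)` are compatible. -/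
theorem agree_on_slice_compatible [Preorder α] (V : ι → Set α)
    (s : Set (ι × ℕ)) (hslice : ∃ X : Set ι, s = X ×ˢ (Set.univ : Set ℕ))
    (p q : Cond ι α)
    (hp : FinSupp p ∧ Valid V p) (hq : FinSupp q ∧ Valid V q)
    (hagree : ∀ i ∈ s, p i = q i)
    (π : Equiv.Perm (ι × ℕ))
    (hpres : ∀ i : ι × ℕ, (π i).1 = i.1)
    (hfix : ∀ i ∈ s, π i = i)
    (hdom : dom p ∩ (π '' dom q) ⊆ s) :
    ∃ r : Cond ι α, FinSupp r ∧ Valid V r ∧ condLE r p ∧ condLE r (act π q) := by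
  classical
  set r : Cond ι α := fun i => if p i = none then act π q i else p i with hr
  have hr_of_some : ∀ i b, p i = some b → r i = some b := by
    intro i b h
    simp [hr, h]
  have hr_of_none : ∀ i, p i = none → r i = act π q i := by
    intro i h
    simp [hr, h]
  refine ⟨r, ?_, ?_, ?_, ?_⟩
  · apply Set.Finite.subset (hp.1.union (hq.1.image π))
    intro i hi
    by_cases h : p i = none
    · right
      rw [dom, Set.mem_setOf_eq, hr_of_none i h] at hi
      exact ⟨π.symm i, hi, π.apply_symm_apply i⟩
    · exact Or.inl h
  · intro i a ha
    by_cases h : p i = none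
    · rw [hr_of_none i h] at ha
      have := hq.2 (π.symm i) a ha
      have h1 := hpres (π.symm i)
      rw [π.apply_symm_apply] at h1
      rwa [h1]
    · rcases Option.ne_none_iff_exists'.mp h with ⟨b, hb⟩
      rw [hr_of_some i b hb] at ha
      exact hp.2 i a (ha ▸ hb)
  · intro i a ha
    exact ⟨a, hr_of_some i a ha, le_refl a⟩
  · intro i a ha
    by_cases h : p i = none
    · exact ⟨a, (hr_of_none i h).trans ha, le_refl a⟩
    · rcases Option.ne_none_iff_exists'.mp h with ⟨b, hb⟩
      have his : i ∈ s := by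
        apply hdom
        constructor
        · exact h
        · refine ⟨π.symm i, ?_, π.apply_symm_apply i⟩
          simp only [dom, Set.mem_setOf_eq]
          intro hn; rw [act, hn] at ha; exact Option.some_ne_none a ha.symm
      have hfi : π.symm i = i := by
        conv_lhs => rw [← hfix i his]
        exact π.symm_apply_apply i
      have hpa : p i = some a := by rw [hagree i his, ← ha, act, hfi]
      exact ⟨a, hr_of_some i a hpa, le_refl a⟩
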